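/- For every t ∈ ℝ and every η ∈ S, one has √Q e^{tBᵀ} η = 0, where e^{tBᵀ} denotes the matrix exponential of tBᵀ. -/

import Mathlib

open Matrix MeasureTheory

/-- The square root of a positive semidefinite matrix (as in the older Mathlib). -/
noncomputable def Matrix.PosSemidef.sqrt {n : Type*} [Fintype n] [DecidableEq n]
    {A : Matrix n n ℝ} (hA : A.PosSemidef) : Matrix n n ℝ :=
  hA.1.eigenvectorUnitary.1 * diagonal ((↑) ∘ Real.sqrt ∘ hA.1.eigenvalues) *
    (star hA.1.eigenvectorUnitary : Matrix n n ℝ)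

/-- The canonical Euclidean norm on `ℝⁿ`. -/
noncomputable def enorm {n : ℕ} (v : Fin n → ℝ) : ℝ := Real.sqrt (∑ i, v i ^ 2)

/-- The canonical Euclidean scalar product on `ℝⁿ`. -/
def euclInner {n : ℕ} (u v : Fin n → ℝ) : ℝ := ∑ i, u i * v i

/-- Membership in `S = ⋂_{j=0}^{n-1} Ker(√Q (Bᵀ)^j)`, where `sq` stands for `√Q`. -/
def memS (n : ℕ) (B sq : Matrix (Fin n) (Fin n) ℝ) (η : Fin n → ℝ) : Prop :=
  ∀ j < n, (sq * Bᵀ ^ j).mulVec η = 0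

/-- Membership in `S^⊥`, the Euclidean orthogonal complement of `S`. -/
def memSperp (n : ℕ) (B sq : Matrix (Fin n) (Fin n) ℝ) (ξ₀ : Fin n → ℝ) : Prop :=
  ∀ η : Fin n → ℝ, memS n B sq η → euclInner ξ₀ η = 0

/-- Membership in `V_k^⊥`, where `V_k = ⋂_{j=0}^{k} Ker(√Q (Bᵀ)^j)`. -/
def memVperp (n : ℕ) (B sq : Matrix (Fin n) (Fin n) ℝ) (k : ℕ) (ξ₀ : Fin n → ℝ) : Prop :=
  ∀ η : Fin n → ℝ, (∀ j ≤ k, (sq * Bᵀ ^ j).mulVec η = 0) → euclInner ξ₀ η = 0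

/-- The index `k_{ξ₀} = min {0 ≤ k ≤ r : ξ₀ ∈ V_k^⊥}` of a vector `ξ₀ ∈ S^⊥`. -/
noncomputable def kIndex (n : ℕ) (B sq : Matrix (Fin n) (Fin n) ℝ) (r : ℕ)
    (ξ₀ : Fin n → ℝ) : ℕ :=
  sInf {k | k ≤ r ∧ memVperp n B sq k ξ₀}

/-- `r` is the smallest integer such that `S = ⋂_{j=0}^{r} Ker(√Q (Bᵀ)^j)`. -/
def IsSmallestr (n : ℕ) (B sq : Matrix (Fin n) (Fin n) ℝ) (r : ℕ) : Prop :=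
  IsLeast {k | ∀ η : Fin n → ℝ,
    (∀ j ≤ k, (sq * Bᵀ ^ j).mulVec η = 0) ↔ memS n B sq η} r

/-- The symbol `a_t(ξ) = (1/2) ∫₀¹ |√Q e^{α t Bᵀ} ξ|^{2s} dα`. -/
noncomputable def symb (n : ℕ) (B sq : Matrix (Fin n) (Fin n) ℝ) (s t : ℝ)
    (ξ : Fin n → ℝ) : ℝ :=
  (1 / 2) * ∫ α in (0:ℝ)..1, _root_.enorm ((sq * NormedSpace.exp ((α * t) • Bᵀ)).mulVec ξ) ^ (2 * s)

lemma sum_mulVec' {n : ℕ} (s : Finset ℕ) (A : ℕ → Matrix (Fin n) (Fin n) ℝ) (η : Fin n → ℝ) :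
    (∑ x ∈ s, A x) *ᵥ η = ∑ x ∈ s, A x *ᵥ η := by
  ext j
  simp only [Matrix.mulVec, dotProduct, Finset.sum_apply, Matrix.sum_apply, Finset.sum_mul]
  rw [Finset.sum_comm]

lemma expKill {n : ℕ} (hn : 1 ≤ n) (M sq : Matrix (Fin n) (Fin n) ℝ) (η : Fin n → ℝ)
    (h : ∀ k, (sq * M ^ k) *ᵥ η = 0) :
    (sq * NormedSpace.exp M) *ᵥ η = 0 := by
  letI : SeminormedRing (Matrix (Fin n) (Fin n) ℝ) := Matrix.linftyOpSemiNormedRing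
  letI : NormedRing (Matrix (Fin n) (Fin n) ℝ) := Matrix.linftyOpNormedRing
  letI : NormedAlgebra ℝ (Matrix (Fin n) (Fin n) ℝ) := Matrix.linftyOpNormedAlgebra
  let L0 : Matrix (Fin n) (Fin n) ℝ →ₗ[ℝ] (Fin n → ℝ) :=
    { toFun := fun A => (sq * A) *ᵥ η
      map_add' := fun A B => by
        show (sq * (A + B)) *ᵥ η = (sq * A) *ᵥ η + (sq * B) *ᵥ η
        rw [mul_add, Matrix.add_mulVec]
      map_smul' := fun c A => by
        show (sq * (c • A)) *ᵥ η = c • ((sq * A) *ᵥ η)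
        rw [Matrix.mul_smul, Matrix.smul_mulVec] }
  let L : Matrix (Fin n) (Fin n) ℝ →L[ℝ] (Fin n → ℝ) := L0.toContinuousLinearMap
  have hs : Summable fun k : ℕ => ((Nat.factorial k : ℝ))⁻¹ • M ^ k := NormedSpace.expSeries_summable' M
  have hL : (sq * NormedSpace.exp M) *ᵥ η = L (NormedSpace.exp M) := rfl
  rw [hL, NormedSpace.exp_eq_tsum ℝ, L.map_tsum hs]
  convert tsum_zero with k
  rw [_root_.map_smul]
  have : L (M ^ k) = (sq * M ^ k) *ᵥ η := rfl
  rw [this, h k, smul_zero]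


lemma powKill (n : ℕ) (hn : 1 ≤ n) (M sq : Matrix (Fin n) (Fin n) ℝ) (η : Fin n → ℝ)
    (h : ∀ j < n, (sq * M ^ j).mulVec η = 0) :
    ∀ k, (sq * M ^ k).mulVec η = 0 := by
  intro k
  set p := Polynomial.X ^ k %ₘ M.charpoly with hp
  have hdeg : p.natDegree < n := by
    rcases eq_or_ne p 0 with h0 | h0
    · simpa [h0] using Nat.lt_of_lt_of_le Nat.zero_lt_one hn
    · have h1 : p.degree < M.charpoly.degree :=
        Polynomial.degree_modByMonic_lt _ (Matrix.charpoly_monic M)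
      have h2 : M.charpoly.degree = (Fintype.card (Fin n) : ℕ) :=
        Matrix.charpoly_degree_eq_dim M
      rw [h2, Fintype.card_fin] at h1
      exact (Polynomial.natDegree_lt_iff_degree_lt h0).2 h1
  have hMk : M ^ k = ∑ i ∈ Finset.range n, p.coeff i • M ^ i := by
    rw [Matrix.pow_eq_aeval_mod_charpoly, ← hp, Polynomial.aeval_eq_sum_range' hdeg]
  rw [hMk, Finset.mul_sum]
  simp only [Matrix.mul_smul]
  rw [sum_mulVec']
  refine Finset.sum_eq_zero fun i hi => ?_
  rw [Matrix.smul_mulVec, h i (Finset.mem_range.mp hi), smul_zero]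

/-- For every `t ∈ ℝ` and every `η ∈ S`, one has `√Q e^{tBᵀ} η = 0`. -/
theorem statement2 (n : ℕ) (hn : 1 ≤ n) (B Q : Matrix (Fin n) (Fin n) ℝ)
    (hQ : Q.PosSemidef) :
    ∀ t : ℝ, ∀ η : Fin n → ℝ, memS n B hQ.sqrt η →
      (hQ.sqrt * NormedSpace.exp (t • Bᵀ)).mulVec η = 0 := by
  intro t η hη
  have hall : ∀ k, (hQ.sqrt * Bᵀ ^ k) *ᵥ η = 0 := powKill n hn Bᵀ hQ.sqrt η hη
  refine expKill hn (t • Bᵀ) hQ.sqrt η fun k => ?_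
  rw [smul_pow, Matrix.mul_smul, Matrix.smul_mulVec, hall k, smul_zero]
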